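/- Let q, z₁, z₂, z₃, z₄ be indeterminates with z₁z₂z₃z₄ = 1, and let C_{ijk} be defined as in the context. Then the polynomial obtained as the numerator (over the common denominator (z₁-z₂)(z₁-z₃)(z₁-z₄)(z₂-z₃)(z₂-z₄)(z₃-z₄)) of C_{123}+C_{124}+C_{213}+C_{214} equals, up to sign, (q+1)²·(z₁-z₂)(z₁-qz₃)(z₁-qz₄)(z₂-qz₃)(z₂-qz₄)(z₃-z₄). -/

import Mathlib

set_option maxHeartbeats 1000000 in
theorem numerator_C123_C124_C213_C214 (q : ℂ) (z₁ z₂ z₃ z₄ : ℂ)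
    (h₁₂ : z₁ ≠ z₂) (h₁₃ : z₁ ≠ z₃) (h₁₄ : z₁ ≠ z₄)
    (h₂₃ : z₂ ≠ z₃) (h₂₄ : z₂ ≠ z₄) (h₃₄ : z₃ ≠ z₄)
    (hprod : z₁ * z₂ * z₃ * z₄ = 1) :
    ∃ ε : ℂ, (ε = 1 ∨ ε = -1) ∧
    ((z₁ - q * z₃) * (z₁ - q * z₂) * (z₁ - q * z₄) * (z₂ - q * z₃) * (z₂ - q * z₄) *
        (z₃ - q * z₄) /
      ((z₁ - z₃) * (z₁ - z₂) * (z₁ - z₄) * (z₂ - z₃) * (z₂ - z₄) * (z₃ - z₄)) +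
     (z₁ - q * z₄) * (z₁ - q * z₂) * (z₁ - q * z₃) * (z₂ - q * z₄) * (z₂ - q * z₃) *
        (z₄ - q * z₃) /
      ((z₁ - z₄) * (z₁ - z₂) * (z₁ - z₃) * (z₂ - z₄) * (z₂ - z₃) * (z₄ - z₃)) +
     (z₂ - q * z₃) * (z₂ - q * z₁) * (z₂ - q * z₄) * (z₁ - q * z₃) * (z₁ - q * z₄) *
        (z₃ - q * z₄) /
      ((z₂ - z₃) * (z₂ - z₁) * (z₂ - z₄) * (z₁ - z₃) * (z₁ - z₄) * (z₃ - z₄)) +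
     (z₂ - q * z₄) * (z₂ - q * z₁) * (z₂ - q * z₃) * (z₁ - q * z₄) * (z₁ - q * z₃) *
        (z₄ - q * z₃) /
      ((z₂ - z₄) * (z₂ - z₁) * (z₂ - z₃) * (z₁ - z₄) * (z₁ - z₃) * (z₄ - z₃))) *
    ((z₁ - z₂) * (z₁ - z₃) * (z₁ - z₄) * (z₂ - z₃) * (z₂ - z₄) * (z₃ - z₄)) =
    ε * (q + 1) ^ 2 * (z₁ - z₂) * (z₁ - q * z₃) * (z₁ - q * z₄) * (z₂ - q * z₃) *
      (z₂ - q * z₄) * (z₃ - z₄) := by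
  refine ⟨1, Or.inl rfl, ?_⟩
  have hD : (z₁ - z₂) * (z₁ - z₃) * (z₁ - z₄) * (z₂ - z₃) * (z₂ - z₄) * (z₃ - z₄) ≠ 0 :=
    mul_ne_zero (mul_ne_zero (mul_ne_zero (mul_ne_zero (mul_ne_zero
      (sub_ne_zero.mpr h₁₂) (sub_ne_zero.mpr h₁₃)) (sub_ne_zero.mpr h₁₄))
      (sub_ne_zero.mpr h₂₃)) (sub_ne_zero.mpr h₂₄)) (sub_ne_zero.mpr h₃₄)
  rw [show (z₁ - z₃) * (z₁ - z₂) * (z₁ - z₄) * (z₂ - z₃) * (z₂ - z₄) * (z₃ - z₄)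
      = (z₁ - z₂) * (z₁ - z₃) * (z₁ - z₄) * (z₂ - z₃) * (z₂ - z₄) * (z₃ - z₄) from by ring,
    show (z₁ - z₄) * (z₁ - z₂) * (z₁ - z₃) * (z₂ - z₄) * (z₂ - z₃) * (z₄ - z₃)
      = -((z₁ - z₂) * (z₁ - z₃) * (z₁ - z₄) * (z₂ - z₃) * (z₂ - z₄) * (z₃ - z₄)) from by ring,
    show (z₂ - z₃) * (z₂ - z₁) * (z₂ - z₄) * (z₁ - z₃) * (z₁ - z₄) * (z₃ - z₄)
      = -((z₁ - z₂) * (z₁ - z₃) * (z₁ - z₄) * (z₂ - z₃) * (z₂ - z₄) * (z₃ - z₄)) from by ring,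
    show (z₂ - z₄) * (z₂ - z₁) * (z₂ - z₃) * (z₁ - z₄) * (z₁ - z₃) * (z₄ - z₃)
      = (z₁ - z₂) * (z₁ - z₃) * (z₁ - z₄) * (z₂ - z₃) * (z₂ - z₄) * (z₃ - z₄) from by ring,
    div_neg, div_neg, ← neg_div, ← neg_div, ← add_div, ← add_div,
    ← add_div, div_mul_cancel₀ _ hD]
  ring
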